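/- Let α ∈ (0,1), λ ∈ ℂ, let a, b be continuous complex-valued functions on [−1,1], let ψ : [−1,1] → [−1,1] be continuous, let Φ be an entire function, and let R₀ > 0. Then for all continuous f, g : [−1,1] → ℂ with ‖f‖_{∞,[−1,1]} ≤ R₀ and ‖g‖_{∞,[−1,1]} ≤ R₀, one has ‖T(f) − T(g)‖_{∞,[−1,1]} ≤ (2^α/(α·Γ(α)))·‖a‖_{∞,[−1,1]}·(sup_{|z|≤R₀}|Φ′(z)|)·‖f − g‖_{∞,[−1,1]}. -/

import Mathlib

/-- `‖f‖_{∞,[−1,1]}`, the supremum of `‖f‖` over `[−1,1]`. -/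
noncomputable def supSeg (f : ℝ → ℂ) : ℝ := ⨆ t : Set.Icc (-1 : ℝ) 1, ‖f t.1‖

/-- The operator `T(f)(t) = (1/Γ(α)) ∫_{−1}^t (t−s)^{α−1}(a(s)·Φ(f(ψ(s))) + b(s)) ds + λ`. -/
noncomputable def TOper (α : ℝ) (lam : ℂ) (a b : ℝ → ℂ) (Φ : ℂ → ℂ) (ψ : ℝ → ℝ)
    (f : ℝ → ℂ) (t : ℝ) : ℂ :=
  (1 / (Real.Gamma α : ℂ)) *
      ∫ s in (-1 : ℝ)..t, ((((t - s) ^ (α - 1) : ℝ)) : ℂ) * (a s * Φ (f (ψ s)) + b s) + lam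

lemma segNe : (Set.Icc (-1 : ℝ) 1).Nonempty := ⟨0, by norm_num⟩

lemma bddSeg {f : ℝ → ℂ} (hf : ContinuousOn f (Set.Icc (-1:ℝ) 1)) :
    BddAbove (Set.range fun t : Set.Icc (-1:ℝ) 1 => ‖f t.1‖) := by
  have := (isCompact_Icc.image_of_continuousOn hf.norm).bddAbove
  rwa [Set.image_eq_range (fun x => ‖f x‖) (Set.Icc (-1:ℝ) 1)] at this

lemma le_supSeg {f : ℝ → ℂ} (hf : ContinuousOn f (Set.Icc (-1:ℝ) 1)) {t : ℝ}
    (ht : t ∈ Set.Icc (-1:ℝ) 1) : ‖f t‖ ≤ supSeg f :=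
  le_ciSup (bddSeg hf) (⟨t, ht⟩ : Set.Icc (-1:ℝ) 1)

lemma supSeg_le {f : ℝ → ℂ} {C : ℝ} (h : ∀ t ∈ Set.Icc (-1:ℝ) 1, ‖f t‖ ≤ C) :
    supSeg f ≤ C := by
  haveI : Nonempty (Set.Icc (-1:ℝ) 1) := segNe.to_subtype
  exact ciSup_le fun t => h t.1 t.2

lemma supSeg_nonneg {f : ℝ → ℂ} (hf : ContinuousOn f (Set.Icc (-1:ℝ) 1)) : 0 ≤ supSeg f :=
  (norm_nonneg _).trans (le_supSeg hf (by norm_num : (0:ℝ) ∈ Set.Icc (-1:ℝ) 1))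

theorem stmt_3 (α R₀ : ℝ) (lam : ℂ) (a b : ℝ → ℂ) (Φ : ℂ → ℂ) (ψ : ℝ → ℝ)
    (hα : α ∈ Set.Ioo (0:ℝ) 1)
    (ha : ContinuousOn a (Set.Icc (-1:ℝ) 1)) (hb : ContinuousOn b (Set.Icc (-1:ℝ) 1))
    (hψ : ContinuousOn ψ (Set.Icc (-1:ℝ) 1))
    (hψm : Set.MapsTo ψ (Set.Icc (-1:ℝ) 1) (Set.Icc (-1:ℝ) 1))
    (hΦ : Differentiable ℂ Φ) (hR₀ : 0 < R₀) :
    ∀ f g : ℝ → ℂ, ContinuousOn f (Set.Icc (-1:ℝ) 1) → ContinuousOn g (Set.Icc (-1:ℝ) 1) →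
      supSeg f ≤ R₀ → supSeg g ≤ R₀ →
      supSeg (fun t => TOper α lam a b Φ ψ f t - TOper α lam a b Φ ψ g t) ≤
        2 ^ α / (α * Real.Gamma α) * supSeg a *
          (⨆ z : Metric.closedBall (0 : ℂ) R₀, ‖deriv Φ z.1‖) *
          supSeg (fun t => f t - g t) := by
  obtain ⟨hα0, hα1⟩ := hα
  intro f g hf hg hfR hgR
  set A := supSeg a with hA
  set M := (⨆ z : Metric.closedBall (0 : ℂ) R₀, ‖deriv Φ z.1‖) with hM
  set D := supSeg (fun t => f t - g t) with hD
  have hΓ : 0 < Real.Gamma α := Real.Gamma_pos_of_pos hα0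
  -- continuity of deriv Φ and bound
  have hderivC : Continuous (deriv Φ) :=
    (hΦ.contDiff : ContDiff ℂ ⊤ Φ).continuous_deriv le_top
  haveI : Nonempty (Metric.closedBall (0 : ℂ) R₀) :=
    ⟨⟨0, Metric.mem_closedBall_self hR₀.le⟩⟩
  have hMbdd : BddAbove (Set.range fun z : Metric.closedBall (0 : ℂ) R₀ => ‖deriv Φ z.1‖) := by
    have := ((isCompact_closedBall (0:ℂ) R₀).image_of_continuousOn
      hderivC.norm.continuousOn).bddAbove
    rwa [Set.image_eq_range (fun z => ‖deriv Φ z‖) (Metric.closedBall (0:ℂ) R₀)] at this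
  have hMle : ∀ z ∈ Metric.closedBall (0 : ℂ) R₀, ‖deriv Φ z‖ ≤ M := fun z hz =>
    le_ciSup hMbdd (⟨z, hz⟩ : Metric.closedBall (0 : ℂ) R₀)
  have hM0 : 0 ≤ M :=
    (norm_nonneg _).trans (hMle 0 (Metric.mem_closedBall_self hR₀.le))
  have hA0 : 0 ≤ A := supSeg_nonneg ha
  have hfg : ContinuousOn (fun t => f t - g t) (Set.Icc (-1:ℝ) 1) := hf.sub hg
  have hD0 : 0 ≤ D := supSeg_nonneg hfg
  -- mean value inequality
  have hMVT : ∀ x y : ℂ, x ∈ Metric.closedBall (0:ℂ) R₀ → y ∈ Metric.closedBall (0:ℂ) R₀ →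
      ‖Φ x - Φ y‖ ≤ M * ‖x - y‖ := fun x y hx hy =>
    Convex.norm_image_sub_le_of_norm_deriv_le (fun z _ => hΦ z) (fun z hz => hMle z hz)
      (convex_closedBall _ _) hy hx
  apply supSeg_le
  intro t ht
  have ht1 : (-1:ℝ) ≤ t := ht.1
  have ht2 : t ≤ 1 := ht.2
  have hsub : Set.uIcc (-1:ℝ) t ⊆ Set.Icc (-1:ℝ) 1 := by
    rw [Set.uIcc_of_le ht1]
    exact Set.Icc_subset_Icc le_rfl ht2
  -- integrability of the rpow kernel
  have hker : IntervalIntegrable (fun s => (t - s) ^ (α - 1)) MeasureTheory.volume (-1) t := by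
    have h0 : IntervalIntegrable (fun x : ℝ => x ^ (α - 1)) MeasureTheory.volume (t + 1) 0 :=
      (intervalIntegral.intervalIntegrable_rpow' (by linarith)).symm
    have := h0.comp_sub_left t
    simpa using this
  have hkerC : IntervalIntegrable (fun s => (((t - s) ^ (α - 1) : ℝ) : ℂ))
      MeasureTheory.volume (-1) t := ⟨hker.1.ofReal, hker.2.ofReal⟩
  -- continuity of inner parts
  have hcomp : ∀ h : ℝ → ℂ, ContinuousOn h (Set.Icc (-1:ℝ) 1) →
      ContinuousOn (fun s => a s * Φ (h (ψ s)) + b s) (Set.Icc (-1:ℝ) 1) := by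
    intro h hh
    exact ((ha.mul (hΦ.continuous.comp_continuousOn (hh.comp hψ hψm))).add hb)
  have hFint : IntervalIntegrable
      (fun s => (((t - s) ^ (α - 1) : ℝ) : ℂ) * (a s * Φ (f (ψ s)) + b s) + lam)
      MeasureTheory.volume (-1) t :=
    (hkerC.mul_continuousOn ((hcomp f hf).mono hsub)).add intervalIntegrable_const
  have hGint : IntervalIntegrable
      (fun s => (((t - s) ^ (α - 1) : ℝ) : ℂ) * (a s * Φ (g (ψ s)) + b s) + lam)
      MeasureTheory.volume (-1) t :=
    (hkerC.mul_continuousOn ((hcomp g hg).mono hsub)).add intervalIntegrable_const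
  have hsplit : TOper α lam a b Φ ψ f t - TOper α lam a b Φ ψ g t =
      (1 / (Real.Gamma α : ℂ)) *
        ∫ s in (-1 : ℝ)..t, (((t - s) ^ (α - 1) : ℝ) : ℂ) *
          (a s * (Φ (f (ψ s)) - Φ (g (ψ s)))) := by
    rw [TOper, TOper, ← mul_sub, ← intervalIntegral.integral_sub hFint hGint]
    congr 1
    exact intervalIntegral.integral_congr fun s _ => by ring
  rw [hsplit, norm_mul]
  have hbound : ‖∫ s in (-1 : ℝ)..t, (((t - s) ^ (α - 1) : ℝ) : ℂ) *
      (a s * (Φ (f (ψ s)) - Φ (g (ψ s))))‖ ≤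
      |∫ s in (-1 : ℝ)..t, (t - s) ^ (α - 1) * (A * (M * D))| := by
    refine intervalIntegral.norm_integral_le_abs_of_norm_le ?_ (hker.mul_const _)
    rw [MeasureTheory.ae_restrict_iff' measurableSet_uIoc]
    filter_upwards with s hs
    have hs' : s ∈ Set.Icc (-1:ℝ) 1 := by
      rw [Set.uIoc_of_le ht1] at hs
      exact ⟨hs.1.le, hs.2.trans ht2⟩
    have hψs : ψ s ∈ Set.Icc (-1:ℝ) 1 := hψm hs'
    have hfb : f (ψ s) ∈ Metric.closedBall (0:ℂ) R₀ := by
      rw [Metric.mem_closedBall, dist_zero_right]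
      exact (le_supSeg hf hψs).trans hfR
    have hgb : g (ψ s) ∈ Metric.closedBall (0:ℂ) R₀ := by
      rw [Metric.mem_closedBall, dist_zero_right]
      exact (le_supSeg hg hψs).trans hgR
    have h1 : ‖Φ (f (ψ s)) - Φ (g (ψ s))‖ ≤ M * D := by
      refine (hMVT _ _ hfb hgb).trans ?_
      exact mul_le_mul_of_nonneg_left (le_supSeg hfg hψs) hM0
    have h2 : ‖a s‖ ≤ A := le_supSeg ha hs'
    rw [norm_mul, norm_mul, Complex.norm_real, Real.norm_eq_abs,
      abs_of_nonneg (Real.rpow_nonneg (by rw [Set.uIoc_of_le ht1] at hs; linarith [hs.2]) _)]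
    refine mul_le_mul_of_nonneg_left ?_ (Real.rpow_nonneg
      (by rw [Set.uIoc_of_le ht1] at hs; linarith [hs.2]) _)
    exact mul_le_mul h2 h1 (norm_nonneg _) hA0
  have hint : (∫ s in (-1 : ℝ)..t, (t - s) ^ (α - 1) * (A * (M * D))) =
      (t + 1) ^ α / α * (A * (M * D)) := by
    rw [intervalIntegral.integral_mul_const]
    congr 1
    rw [intervalIntegral.integral_comp_sub_left (fun u => u ^ (α - 1)) t]
    rw [sub_self, sub_neg_eq_add, integral_rpow (Or.inl (by linarith))]
    rw [sub_add_cancel, Real.zero_rpow (by positivity)]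
    ring
  have hnorm1 : ‖(1 / (Real.Gamma α : ℂ))‖ = 1 / Real.Gamma α := by
    rw [norm_div, norm_one, Complex.norm_real, Real.norm_eq_abs, abs_of_pos hΓ]
  calc ‖(1 / (Real.Gamma α : ℂ))‖ * ‖∫ s in (-1 : ℝ)..t, (((t - s) ^ (α - 1) : ℝ) : ℂ) *
        (a s * (Φ (f (ψ s)) - Φ (g (ψ s))))‖
      ≤ (1 / Real.Gamma α) * ((t + 1) ^ α / α * (A * (M * D))) := by
        rw [hnorm1]
        apply mul_le_mul_of_nonneg_left _ (by positivity)
        refine hbound.trans ?_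
        have h1 : (0:ℝ) ≤ (t + 1) ^ α := Real.rpow_nonneg (by linarith) _
        rw [hint, abs_of_nonneg (mul_nonneg (div_nonneg h1 hα0.le) (by positivity))]
    _ ≤ 2 ^ α / (α * Real.Gamma α) * A * M * D := by
        have h2a : (t + 1) ^ α ≤ 2 ^ α := by
          apply Real.rpow_le_rpow (by linarith) (by linarith) hα0.le
        have hAMD : 0 ≤ A * (M * D) := by positivity
        calc (1 / Real.Gamma α) * ((t + 1) ^ α / α * (A * (M * D)))
            ≤ (1 / Real.Gamma α) * (2 ^ α / α * (A * (M * D))) := by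
              apply mul_le_mul_of_nonneg_left _ (by positivity)
              apply mul_le_mul_of_nonneg_right _ hAMD
              exact div_le_div_of_nonneg_right h2a hα0.le
          _ = 2 ^ α / (α * Real.Gamma α) * A * M * D := by
              field_simp
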